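/- (Sewing Lemma with semigroup) Let (S_t) be a strongly continuous semigroup of bounded operators on a Banach space V with sup_{0≤t≤T} ‖S_t‖ ≤ M, let 0 < γ ≤ 1 < μ, and let Ξ : Δ_2 → V be continuous with |Ξ_{t,s}| ≤ C|t−s|^γ and |(δ̂Ξ)_{t,u,s}| ≤ C|t−s|^μ where (δ̂Ξ)_{t,u,s} = Ξ_{t,s} − Ξ_{t,u} − S_{t−u}Ξ_{u,s}. Then the limit I_{t,s} := lim_{|P|→0} Σ_{[u,v]∈P} S_{t−v} Ξ_{v,u} over partitions P of [s,t] exists in V, satisfies δ̂I = 0, and ‖I_{t,s} − Ξ_{t,s}‖ ≤ K·C·|t−s|^μ for a constant K depending only on μ and M. -/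

import Mathlib

open Finset

section SewAux

variable {V : Type*} [NormedAddCommGroup V] [NormedSpace ℝ V]

/-- Riemann-type sum for the sewing lemma. -/
noncomputable def sewRS (S : ℝ → V →L[ℝ] V) (Ξ : ℝ → ℝ → V) (t : ℝ) (σ : ℕ → ℝ) (n : ℕ) : V :=
  ∑ i ∈ Finset.range n, S (t - σ (i + 1)) (Ξ (σ (i + 1)) (σ i))

lemma sew_chain {α : Type*} [Preorder α] {σ : ℕ → α} {n : ℕ} (h : ∀ i < n, σ i ≤ σ (i + 1)) :
    ∀ i j, i ≤ j → j ≤ n → σ i ≤ σ j := by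
  intro i j hij hjn
  induction j with
  | zero => simp_all
  | succ k ih =>
    rcases Nat.lt_or_ge i (k+1) with hlt | hge
    · exact le_trans (ih (Nat.lt_succ_iff.mp hlt) (le_trans (Nat.le_succ _) hjn))
        (h k (Nat.lt_of_succ_le hjn))
    · have : i = k + 1 := le_antisymm hij hge
      simp [this]

lemma sew_telescope (f : ℕ → ℝ) :
    ∀ n, 1 ≤ n → ∑ j ∈ Finset.Ico 1 n, (f (j+1) - f (j-1)) = f n + f (n-1) - f 1 - f 0 := by
  intro n hn
  induction n with
  | zero => omega
  | succ k ih =>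
    rcases Nat.lt_or_ge k 1 with hk | hk
    · interval_cases k
      · simp
    · rw [Finset.sum_Ico_succ_top hk, ih hk]
      have hk1 : k - 1 + 1 = k := by omega
      simp [hk1]
      ring

lemma sew_sum_rpow_neg_le {μ : ℝ} (hμ : 1 < μ) (m : ℕ) :
    ∑ k ∈ Finset.Icc 1 m, ((k : ℝ)) ^ (-μ) ≤ μ / (μ - 1) := by
  have hμ0 : (0:ℝ) < μ - 1 := by linarith
  have key : ∀ m : ℕ, ∑ k ∈ Finset.Icc 1 m, ((k : ℝ)) ^ (-μ) ≤
      1 + (1 - (m : ℝ) ^ (1 - μ)) / (μ - 1) := by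
    intro m
    induction m with
    | zero =>
      simp [Real.zero_rpow (by linarith : (1:ℝ) - μ ≠ 0)]
      positivity
    | succ m ih =>
      rcases Nat.eq_zero_or_pos m with rfl | hm
      · norm_num [Real.one_rpow]
      · have hx : (0:ℝ) < m := by exact_mod_cast hm
        have hy : (0:ℝ) < (m:ℝ) + 1 := by linarith
        set a := ((m:ℝ)) ^ (1-μ) with ha'
        set b := ((m:ℝ)+1) ^ (1-μ) with hb'
        set c := ((m:ℝ)+1) ^ (-μ) with hc'
        set d := ((m:ℝ)+1) ^ μ with hd'
        set e := ((m:ℝ)) ^ μ with he'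
        have hd : 0 < d := Real.rpow_pos_of_pos hy μ
        have he : 0 < e := Real.rpow_pos_of_pos hx μ
        have hcd : d * c = 1 := by rw [hd', hc', ← Real.rpow_add hy]; simp
        have hbd : b * d = (m:ℝ) + 1 := by
          rw [hb', hd', ← Real.rpow_add hy]; norm_num
        have hae : a * e = (m:ℝ) := by
          rw [ha', he', ← Real.rpow_add hx]; norm_num
        have hb : 1 + μ * (1/(m:ℝ)) ≤ (1 + 1/(m:ℝ)) ^ μ :=
          one_add_mul_self_le_rpow_one_add
            (by nlinarith [one_div_pos.mpr hx]) hμ.le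
        have h7 : (1 + 1/(m:ℝ)) ^ μ = d / e := by
          rw [show (1:ℝ) + 1/(m:ℝ) = ((m:ℝ)+1)/(m:ℝ) by field_simp,
            Real.div_rpow hy.le hx.le]
        have h5 : ((m:ℝ) + μ) * e ≤ (m:ℝ) * d := by
          have h6 := mul_le_mul_of_nonneg_left hb (le_of_lt (mul_pos hx he))
          rw [h7] at h6
          calc ((m:ℝ) + μ) * e = (m:ℝ) * e * (1 + μ * (1/(m:ℝ))) := by
                field_simp
            _ ≤ (m:ℝ) * e * (d / e) := h6
            _ = (m:ℝ) * d := by field_simp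
        have hstep : c ≤ (a - b) / (μ - 1) := by
          have ha2 : a = (m:ℝ) / e := by rw [eq_div_iff he.ne']; exact hae
          have hb2 : b = ((m:ℝ)+1) / d := by rw [eq_div_iff hd.ne']; exact hbd
          have hc2 : c = 1 / d := by
            rw [eq_div_iff hd.ne']; rw [mul_comm] at hcd; exact hcd
          rw [le_div_iff₀ hμ0, ha2, hb2, hc2, div_sub_div _ _ he.ne' hd.ne',
            div_mul_eq_mul_div, div_le_div_iff₀ hd (mul_pos he hd)]
          nlinarith [h5, hd, he]
        rw [Finset.sum_Icc_succ_top (by omega : 1 ≤ m + 1)]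
        push_cast
        calc (∑ k ∈ Finset.Icc 1 m, ((k:ℝ)) ^ (-μ)) + ((m:ℝ)+1) ^ (-μ)
            ≤ (1 + (1 - a) / (μ - 1)) + (a - b) / (μ - 1) := add_le_add ih hstep
          _ = 1 + (1 - b) / (μ - 1) := by ring
  refine le_trans (key m) ?_
  have hnn : (0:ℝ) ≤ (m : ℝ) ^ (1 - μ) := Real.rpow_nonneg (Nat.cast_nonneg m) _
  have heq : 1 + (1 - (m : ℝ) ^ (1 - μ)) / (μ - 1) = (μ - (m : ℝ) ^ (1 - μ)) / (μ - 1) := by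
    field_simp; ring
  rw [heq, div_le_div_iff₀ hμ0 hμ0]
  nlinarith

/-- Splitting a Riemann sum at index `k`, with `u = σ k`. -/
lemma sewRS_split (S : ℝ → V →L[ℝ] V) (Ξ : ℝ → ℝ → V)
    (hSadd : ∀ a b : ℝ, 0 ≤ a → 0 ≤ b → S (a + b) = (S a).comp (S b))
    (t u : ℝ) (σ : ℕ → ℝ) (n k : ℕ) (hk : k ≤ n) (hut : u ≤ t)
    (hσu : ∀ i, i ≤ k → σ i ≤ u) :
    sewRS S Ξ t σ n =
      (∑ i ∈ Finset.Ico k n, S (t - σ (i + 1)) (Ξ (σ (i + 1)) (σ i)))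
        + S (t - u) (sewRS S Ξ u σ k) := by
  unfold sewRS
  rw [Finset.range_eq_Ico, ← Finset.sum_Ico_consecutive _ (Nat.zero_le k) hk, add_comm]
  congr 1
  rw [map_sum]
  rw [← Finset.range_eq_Ico]
  refine Finset.sum_congr rfl ?_
  intro i hi
  rw [Finset.mem_range] at hi
  have h1 : (0:ℝ) ≤ t - u := by linarith
  have h2 : (0:ℝ) ≤ u - σ (i+1) := by
    have := hσu (i+1) (by omega); linarith
  have : t - σ (i+1) = (t - u) + (u - σ (i+1)) := by ring
  rw [this, hSadd _ _ h1 h2]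
  rfl

/-- Removing one interior point from a partition changes the Riemann sum
by an image of a `δ̂Ξ` term. -/
lemma sew_removal (S : ℝ → V →L[ℝ] V) (Ξ : ℝ → ℝ → V)
    (hSadd : ∀ a b : ℝ, 0 ≤ a → 0 ≤ b → S (a + b) = (S a).comp (S b))
    (t : ℝ) (σ : ℕ → ℝ) (m p : ℕ) (hp : p ≤ m)
    (h1 : 0 ≤ t - σ (p + 2)) (h2 : σ (p + 1) ≤ σ (p + 2)) :
    sewRS S Ξ t σ (m + 2) - sewRS S Ξ t (fun i => if i < p + 1 then σ i else σ (i + 1)) (m + 1)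
      = - S (t - σ (p + 2)) (Ξ (σ (p + 2)) (σ p) - Ξ (σ (p + 2)) (σ (p + 1))
          - S (σ (p + 2) - σ (p + 1)) (Ξ (σ (p + 1)) (σ p))) := by
  set A : ℕ → V := fun i => S (t - σ (i + 1)) (Ξ (σ (i + 1)) (σ i)) with hA
  set σ' : ℕ → ℝ := fun i => if i < p + 1 then σ i else σ (i + 1) with hσ'
  set A' : ℕ → V := fun i => S (t - σ' (i + 1)) (Ξ (σ' (i + 1)) (σ' i)) with hA'
  have e1 : ∀ i < p, A' i = A i := by
    intro i hi
    simp only [hA', hσ', if_pos (by omega : i + 1 < p + 1), if_pos (by omega : i < p + 1), hA]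
  have e2 : A' p = S (t - σ (p + 2)) (Ξ (σ (p + 2)) (σ p)) := by
    simp only [hA', hσ', if_neg (by omega : ¬ p + 1 < p + 1), if_pos (by omega : p < p + 1)]
  have e3 : ∀ i, p + 1 ≤ i → A' i = A (i + 1) := by
    intro i hi
    simp only [hA', hσ', if_neg (by omega : ¬ i + 1 < p + 1), if_neg (by omega : ¬ i < p + 1), hA]
  have hs1 : sewRS S Ξ t σ (m + 2)
      = (∑ i ∈ Finset.Ico 0 p, A i) + A p + A (p + 1) + ∑ i ∈ Finset.Ico (p + 2) (m + 2), A i := by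
    unfold sewRS
    rw [Finset.range_eq_Ico,
      ← Finset.sum_Ico_consecutive A (Nat.zero_le (p+2)) (by omega : p + 2 ≤ m + 2),
      ← Finset.sum_Ico_consecutive A (Nat.zero_le (p+1)) (by omega : p + 1 ≤ p + 2),
      ← Finset.sum_Ico_consecutive A (Nat.zero_le p) (by omega : p ≤ p + 1)]
    have : ∑ i ∈ Finset.Ico p (p+1), A i = A p := by
      rw [Finset.sum_Ico_succ_top (le_refl p), Finset.Ico_self, Finset.sum_empty, zero_add]
    have h2' : ∑ i ∈ Finset.Ico (p+1) (p+2), A i = A (p+1) := by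
      rw [Finset.sum_Ico_succ_top (by omega : p + 1 ≤ p + 1), Finset.Ico_self,
        Finset.sum_empty, zero_add]
    rw [this, h2']
  have hs2 : sewRS S Ξ t σ' (m + 1)
      = (∑ i ∈ Finset.Ico 0 p, A i) + A' p + ∑ i ∈ Finset.Ico (p + 2) (m + 2), A i := by
    unfold sewRS
    rw [Finset.range_eq_Ico,
      ← Finset.sum_Ico_consecutive A' (Nat.zero_le (p+1)) (by omega : p + 1 ≤ m + 1),
      ← Finset.sum_Ico_consecutive A' (Nat.zero_le p) (by omega : p ≤ p + 1)]
    have hap : ∑ i ∈ Finset.Ico p (p+1), A' i = A' p := by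
      rw [Finset.sum_Ico_succ_top (le_refl p), Finset.Ico_self, Finset.sum_empty, zero_add]
    have h0 : ∑ i ∈ Finset.Ico 0 p, A' i = ∑ i ∈ Finset.Ico 0 p, A i :=
      Finset.sum_congr rfl (fun i hi => e1 i (by simpa using (Finset.mem_Ico.mp hi).2))
    have hsh : ∑ i ∈ Finset.Ico (p+1) (m+1), A' i = ∑ i ∈ Finset.Ico (p+2) (m+2), A i := by
      rw [Finset.sum_Ico_eq_sum_range, Finset.sum_Ico_eq_sum_range]
      have : m + 1 - (p + 1) = m + 2 - (p + 2) := by omega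
      rw [this]
      refine Finset.sum_congr rfl ?_
      intro i _
      rw [e3 (p + 1 + i) (by omega)]
      congr 1
      omega
    rw [hap, h0, hsh]
  rw [hs1, hs2, e2]
  have hcomp : S (t - σ (p + 1)) = (S (t - σ (p + 2))).comp (S (σ (p + 2) - σ (p + 1))) := by
    rw [← hSadd _ _ h1 (by linarith)]
    congr 1
    ring
  simp only [hA]
  rw [hcomp]
  simp only [ContinuousLinearMap.comp_apply, map_sub]
  abel

/-- Key estimate (Lemma A): comparison of a Riemann sum with the germ. -/
lemma sew_key (S : ℝ → V →L[ℝ] V) (Ξ : ℝ → ℝ → V) (T M C γ μ : ℝ)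
    (hμ : 1 < μ) (hγ : 0 < γ) (hM : 0 < M) (hC : 0 ≤ C)
    (hS0 : S 0 = ContinuousLinearMap.id ℝ V)
    (hSadd : ∀ a b : ℝ, 0 ≤ a → 0 ≤ b → S (a + b) = (S a).comp (S b))
    (hSnorm : ∀ r : ℝ, 0 ≤ r → r ≤ T → ‖S r‖ ≤ M)
    (hΞ1 : ∀ s t : ℝ, 0 ≤ s → s ≤ t → t ≤ T → ‖Ξ t s‖ ≤ C * (t - s) ^ γ)
    (hΞ2 : ∀ s u t : ℝ, 0 ≤ s → s ≤ u → u ≤ t → t ≤ T →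
      ‖Ξ t s - Ξ t u - S (t - u) (Ξ u s)‖ ≤ C * (t - s) ^ μ) :
    ∀ n (s t : ℝ) (σ : ℕ → ℝ), 0 ≤ s → t ≤ T → σ 0 = s → σ n = t → (∀ i < n, σ i ≤ σ (i + 1)) →
      ‖sewRS S Ξ t σ n - Ξ t s‖
        ≤ M * C * (2 * (t - s)) ^ μ * ∑ k ∈ Finset.Icc 1 (n - 1), ((k : ℝ)) ^ (-μ) := by
  intro n
  induction n using Nat.strong_induction_on with
  | _ n IH =>
  intro s t σ hs0 htT hσ0 hσn hmono
  match n with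
  | 0 =>
    have hst : s = t := by rw [← hσ0, ← hσn]
    subst hst
    have h0 : ‖Ξ s s‖ ≤ 0 := by
      have := hΞ1 s s hs0 le_rfl htT
      rwa [sub_self, Real.zero_rpow hγ.ne', mul_zero] at this
    simp only [sewRS, Finset.range_zero, Finset.sum_empty, zero_sub, norm_neg]
    rw [sub_self, mul_zero, Real.zero_rpow (by linarith : μ ≠ 0), mul_zero, zero_mul]
    exact h0
  | 1 =>
    have h1 : sewRS S Ξ t σ 1 = Ξ t s := by
      simp only [sewRS, Finset.range_one, Finset.sum_singleton, hσn, hσ0, sub_self, hS0]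
      rfl
    rw [h1, sub_self, norm_zero]
    simp
  | (m + 2) =>
    set n := m + 2 with hn
    have hst : s ≤ t := by
      rw [← hσ0, ← hσn]; exact sew_chain hmono 0 n (Nat.zero_le _) le_rfl
    -- find a point with small combined gap
    have hex : ∃ j, 1 ≤ j ∧ j ≤ n - 1 ∧ σ (j+1) - σ (j-1) ≤ 2 * (t - s) / (n - 1 : ℕ) := by
      by_contra hcon
      push_neg at hcon
      have hlt : ∀ j ∈ Finset.Ico 1 n, 2 * (t - s) / ((n:ℕ) - 1 : ℕ) < σ (j+1) - σ (j-1) := by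
        intro j hj
        rw [Finset.mem_Ico] at hj
        exact hcon j hj.1 (by omega)
      have hne : (Finset.Ico 1 n).Nonempty := by
        rw [Finset.nonempty_Ico]; omega
      have hsum := Finset.sum_lt_sum_of_nonempty hne hlt
      rw [Finset.sum_const, Nat.card_Ico, sew_telescope σ n (by omega)] at hsum
      have hc1 : σ (n-1) ≤ t := by
        rw [← hσn]; exact sew_chain hmono (n-1) n (by omega) le_rfl
      have hc2 : s ≤ σ 1 := by
        rw [← hσ0]; exact sew_chain hmono 0 1 (by omega) (by omega)
      have hcard : ((n - 1 : ℕ) : ℝ) = (m:ℝ) + 1 := by push_cast [hn]; ring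
      rw [nsmul_eq_mul, hcard] at hsum
      have : ((m:ℝ) + 1) * (2 * (t - s) / ((m:ℝ) + 1)) = 2 * (t - s) := by
        field_simp
      rw [this] at hsum
      rw [hσ0, hσn] at hsum
      linarith
    obtain ⟨j, hj1, hj2, hjsmall⟩ := hex
    obtain ⟨p, rfl⟩ : ∃ p, j = p + 1 := ⟨j - 1, by omega⟩
    have hpm : p ≤ m := by omega
    simp only [show p + 1 + 1 = p + 2 from by omega, show p + 1 - 1 = p from by omega] at hjsmall
    set σ' : ℕ → ℝ := fun i => if i < p + 1 then σ i else σ (i + 1) with hσ'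
    have hσ'0 : σ' 0 = s := by simp only [hσ', if_pos (by omega : 0 < p + 1)]; exact hσ0
    have hσ'n : σ' (m + 1) = t := by
      simp only [hσ', if_neg (by omega : ¬ m + 1 < p + 1)]; exact hσn
    have hmono' : ∀ i < m + 1, σ' i ≤ σ' (i + 1) := by
      intro i hi
      simp only [hσ']
      split_ifs with h1 h2 h2
      · exact hmono i (by omega)
      · exact sew_chain hmono i (i+2) (by omega) (by omega)
      · exact absurd h2 (by omega)
      · exact hmono (i+1) (by omega)
    have hIH := IH (m + 1) (by omega) s t σ' hs0 htT hσ'0 hσ'n hmono'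
    -- bounds for the removal term
    have hσp2T : σ (p + 2) ≤ T := le_trans (by rw [← hσn]; exact sew_chain hmono (p+2) n (by omega) le_rfl) htT
    have hσp0 : 0 ≤ σ p := le_trans hs0 (by rw [← hσ0]; exact sew_chain hmono 0 p (Nat.zero_le _) (by omega))
    have h12 : σ (p+1) ≤ σ (p+2) := sew_chain hmono (p+1) (p+2) (by omega) (by omega)
    have h01 : σ p ≤ σ (p+1) := sew_chain hmono p (p+1) (by omega) (by omega)
    have htp2 : σ (p + 2) ≤ t := by rw [← hσn]; exact sew_chain hmono (p+2) n (by omega) le_rfl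
    have hrem := sew_removal S Ξ hSadd t σ m p hpm (by linarith) h12
    have hδ : ‖Ξ (σ (p + 2)) (σ p) - Ξ (σ (p + 2)) (σ (p + 1))
        - S (σ (p + 2) - σ (p + 1)) (Ξ (σ (p + 1)) (σ p))‖ ≤ C * (σ (p+2) - σ p) ^ μ :=
      hΞ2 (σ p) (σ (p+1)) (σ (p+2)) hσp0 h01 h12 hσp2T
    have hSop : ‖S (t - σ (p + 2))‖ ≤ M := hSnorm _ (by linarith) (by linarith)
    have hremnorm : ‖sewRS S Ξ t σ n - sewRS S Ξ t σ' (m + 1)‖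
        ≤ M * (C * (σ (p+2) - σ p) ^ μ) := by
      rw [hrem, norm_neg]
      calc ‖S (t - σ (p + 2)) (Ξ (σ (p + 2)) (σ p) - Ξ (σ (p + 2)) (σ (p + 1))
          - S (σ (p + 2) - σ (p + 1)) (Ξ (σ (p + 1)) (σ p)))‖
          ≤ ‖S (t - σ (p + 2))‖ * ‖Ξ (σ (p + 2)) (σ p) - Ξ (σ (p + 2)) (σ (p + 1))
            - S (σ (p + 2) - σ (p + 1)) (Ξ (σ (p + 1)) (σ p))‖ :=
            (S (t - σ (p + 2))).le_opNorm _
        _ ≤ M * (C * (σ (p+2) - σ p) ^ μ) := by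
            apply mul_le_mul hSop hδ (norm_nonneg _)
            exact hM.le
    -- the gap bound
    have hgap : (σ (p+2) - σ p) ^ μ ≤ (2 * (t - s)) ^ μ * ((m:ℝ) + 1) ^ (-μ) := by
      have hg0 : (0:ℝ) ≤ σ (p+2) - σ p := by linarith
      have hm1 : (0:ℝ) < (m:ℝ) + 1 := by positivity
      have hb : σ (p+2) - σ p ≤ 2 * (t - s) / ((m:ℝ) + 1) := by
        have : ((n - 1 : ℕ) : ℝ) = (m:ℝ) + 1 := by push_cast [hn]; ring
        rw [this] at hjsmall
        simpa using hjsmall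
      calc (σ (p+2) - σ p) ^ μ ≤ (2 * (t - s) / ((m:ℝ) + 1)) ^ μ :=
            Real.rpow_le_rpow hg0 hb (by linarith)
        _ = (2 * (t - s)) ^ μ * ((m:ℝ) + 1) ^ (-μ) := by
            rw [Real.div_rpow (by linarith) hm1.le, Real.rpow_neg hm1.le, div_eq_mul_inv]
    -- combine
    have htri : ‖sewRS S Ξ t σ n - Ξ t s‖
        ≤ ‖sewRS S Ξ t σ' (m+1) - Ξ t s‖ + ‖sewRS S Ξ t σ n - sewRS S Ξ t σ' (m + 1)‖ := by
      have : sewRS S Ξ t σ n - Ξ t s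
          = (sewRS S Ξ t σ' (m+1) - Ξ t s) + (sewRS S Ξ t σ n - sewRS S Ξ t σ' (m + 1)) := by
        abel
      rw [this]; exact norm_add_le _ _
    have hsum_split : ∑ k ∈ Finset.Icc 1 (n - 1), ((k : ℝ)) ^ (-μ)
        = (∑ k ∈ Finset.Icc 1 m, ((k : ℝ)) ^ (-μ)) + ((m:ℝ) + 1) ^ (-μ) := by
      have : n - 1 = m + 1 := by omega
      rw [this, Finset.sum_Icc_succ_top (by omega : 1 ≤ m + 1)]
      push_cast
      ring_nf
    rw [hsum_split]
    have hMC : (0:ℝ) ≤ M * C := mul_nonneg hM.le hC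
    have h2ts : (0:ℝ) ≤ (2 * (t - s)) ^ μ := Real.rpow_nonneg (by linarith) _
    calc ‖sewRS S Ξ t σ n - Ξ t s‖
        ≤ ‖sewRS S Ξ t σ' (m+1) - Ξ t s‖ + ‖sewRS S Ξ t σ n - sewRS S Ξ t σ' (m + 1)‖ := htri
      _ ≤ M * C * (2 * (t - s)) ^ μ * (∑ k ∈ Finset.Icc 1 m, ((k : ℝ)) ^ (-μ))
          + M * (C * (σ (p+2) - σ p) ^ μ) := by
          apply add_le_add _ hremnorm
          simpa using hIH
      _ ≤ M * C * (2 * (t - s)) ^ μ * (∑ k ∈ Finset.Icc 1 m, ((k : ℝ)) ^ (-μ))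
          + M * C * ((2 * (t - s)) ^ μ * ((m:ℝ) + 1) ^ (-μ)) := by
          apply add_le_add_right
          rw [mul_assoc M C _]
          apply mul_le_mul_of_nonneg_left _ hM.le
          exact mul_le_mul_of_nonneg_left hgap hC
      _ = M * C * (2 * (t - s)) ^ μ * ((∑ k ∈ Finset.Icc 1 m, ((k : ℝ)) ^ (-μ))
          + ((m:ℝ) + 1) ^ (-μ)) := by ring

/-- Corollary of the key estimate with a clean constant. -/
lemma sew_key' (S : ℝ → V →L[ℝ] V) (Ξ : ℝ → ℝ → V) (T M C γ μ : ℝ)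
    (hμ : 1 < μ) (hγ : 0 < γ) (hM : 0 < M) (hC : 0 ≤ C)
    (hS0 : S 0 = ContinuousLinearMap.id ℝ V)
    (hSadd : ∀ a b : ℝ, 0 ≤ a → 0 ≤ b → S (a + b) = (S a).comp (S b))
    (hSnorm : ∀ r : ℝ, 0 ≤ r → r ≤ T → ‖S r‖ ≤ M)
    (hΞ1 : ∀ s t : ℝ, 0 ≤ s → s ≤ t → t ≤ T → ‖Ξ t s‖ ≤ C * (t - s) ^ γ)
    (hΞ2 : ∀ s u t : ℝ, 0 ≤ s → s ≤ u → u ≤ t → t ≤ T →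
      ‖Ξ t s - Ξ t u - S (t - u) (Ξ u s)‖ ≤ C * (t - s) ^ μ)
    (n : ℕ) (s t : ℝ) (σ : ℕ → ℝ) (hs0 : 0 ≤ s) (htT : t ≤ T) (hσ0 : σ 0 = s) (hσn : σ n = t)
    (hmono : ∀ i < n, σ i ≤ σ (i + 1)) :
      ‖sewRS S Ξ t σ n - Ξ t s‖
        ≤ (M * 2 ^ μ * (μ / (μ - 1))) * C * (t - s) ^ μ := by
  have hst : s ≤ t := by
    rw [← hσ0, ← hσn]; exact sew_chain hmono 0 n (Nat.zero_le _) le_rfl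
  have h1 := sew_key S Ξ T M C γ μ hμ hγ hM hC hS0 hSadd hSnorm hΞ1 hΞ2 n s t σ hs0 htT hσ0 hσn hmono
  have h2 : (2 * (t - s)) ^ μ = 2 ^ μ * (t - s) ^ μ :=
    Real.mul_rpow (by norm_num) (by linarith)
  have h3 := sew_sum_rpow_neg_le hμ (n - 1)
  have hnn : (0:ℝ) ≤ M * C * (2 * (t - s)) ^ μ := by
    apply mul_nonneg (mul_nonneg hM.le hC) (Real.rpow_nonneg (by linarith) _)
  calc ‖sewRS S Ξ t σ n - Ξ t s‖
      ≤ M * C * (2 * (t - s)) ^ μ * ∑ k ∈ Finset.Icc 1 (n - 1), ((k : ℝ)) ^ (-μ) := h1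
    _ ≤ M * C * (2 * (t - s)) ^ μ * (μ / (μ - 1)) := by
        exact mul_le_mul_of_nonneg_left h3 hnn
    _ = (M * 2 ^ μ * (μ / (μ - 1))) * C * (t - s) ^ μ := by rw [h2]; ring

lemma sew_blocks (f : ℕ → V) (ι : ℕ → ℕ) :
    ∀ n, (∀ j < n, ι j ≤ ι (j + 1)) → ι 0 = 0 →
      ∑ i ∈ Finset.range (ι n), f i = ∑ j ∈ Finset.range n, ∑ i ∈ Finset.Ico (ι j) (ι (j + 1)), f i := by
  intro n
  induction n with
  | zero => intro _ h0; simp [h0]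
  | succ k ih =>
    intro hmono h0
    rw [Finset.sum_range_succ, ← ih (fun j hj => hmono j (by omega)) h0,
      Finset.range_eq_Ico,
      ← Finset.sum_Ico_consecutive f (Nat.zero_le (ι k)) (hmono k (by omega)),
      ← Finset.range_eq_Ico]

lemma sew_mesh_sum (σ : ℕ → ℝ) (n : ℕ) (δ μ : ℝ) (hδ : 0 ≤ δ) (hμ : 1 ≤ μ)
    (hmono : ∀ i < n, σ i ≤ σ (i + 1)) (hmesh : ∀ i < n, σ (i + 1) - σ i ≤ δ) :
    ∑ j ∈ Finset.range n, (σ (j + 1) - σ j) ^ μ ≤ δ ^ (μ - 1) * (σ n - σ 0) := by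
  calc ∑ j ∈ Finset.range n, (σ (j + 1) - σ j) ^ μ
      ≤ ∑ j ∈ Finset.range n, δ ^ (μ - 1) * (σ (j + 1) - σ j) := by
        refine Finset.sum_le_sum ?_
        intro j hj
        rw [Finset.mem_range] at hj
        have hg : 0 ≤ σ (j + 1) - σ j := by have := hmono j hj; linarith
        rcases eq_or_lt_of_le hg with heq | hpos
        · rw [← heq, Real.zero_rpow (by linarith : μ ≠ 0)]
          positivity
        · have h1 : (σ (j + 1) - σ j) ^ μ = (σ (j + 1) - σ j) ^ (μ - 1) * (σ (j + 1) - σ j) := by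
            have h2 := Real.rpow_add hpos (μ - 1) 1
            rw [Real.rpow_one] at h2
            rw [show μ - 1 + 1 = μ from by ring] at h2
            exact h2
          rw [h1]
          apply mul_le_mul_of_nonneg_right _ hg
          exact Real.rpow_le_rpow hg (hmesh j hj) (by linarith)
    _ = δ ^ (μ - 1) * (σ n - σ 0) := by
        rw [← Finset.mul_sum, Finset.sum_range_sub]

/-- Refinement estimate: a refinement of `σ` has Riemann sum close to that of `σ`. -/
lemma sew_refine (S : ℝ → V →L[ℝ] V) (Ξ : ℝ → ℝ → V) (T M C γ μ : ℝ)
    (hμ : 1 < μ) (hγ : 0 < γ) (hM : 0 < M) (hC : 0 ≤ C)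
    (hS0 : S 0 = ContinuousLinearMap.id ℝ V)
    (hSadd : ∀ a b : ℝ, 0 ≤ a → 0 ≤ b → S (a + b) = (S a).comp (S b))
    (hSnorm : ∀ r : ℝ, 0 ≤ r → r ≤ T → ‖S r‖ ≤ M)
    (hΞ1 : ∀ s t : ℝ, 0 ≤ s → s ≤ t → t ≤ T → ‖Ξ t s‖ ≤ C * (t - s) ^ γ)
    (hΞ2 : ∀ s u t : ℝ, 0 ≤ s → s ≤ u → u ≤ t → t ≤ T →
      ‖Ξ t s - Ξ t u - S (t - u) (Ξ u s)‖ ≤ C * (t - s) ^ μ)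
    (s t : ℝ) (hs0 : 0 ≤ s) (htT : t ≤ T)
    (σ : ℕ → ℝ) (n : ℕ) (hσ0 : σ 0 = s) (hσn : σ n = t) (hmono : ∀ i < n, σ i ≤ σ (i + 1))
    (ρ : ℕ → ℝ) (N : ℕ) (hρmono : ∀ i < N, ρ i ≤ ρ (i + 1))
    (ι : ℕ → ℕ) (hι0 : ι 0 = 0) (hιn : ι n = N) (hιmono : ∀ j < n, ι j ≤ ι (j + 1))
    (hcompat : ∀ j ≤ n, ρ (ι j) = σ j) :
    ‖sewRS S Ξ t ρ N - sewRS S Ξ t σ n‖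
      ≤ M * ((M * 2 ^ μ * (μ / (μ - 1))) * C) * ∑ j ∈ Finset.range n, (σ (j + 1) - σ j) ^ μ := by
  have hst : s ≤ t := by
    rw [← hσ0, ← hσn]; exact sew_chain hmono 0 n (Nat.zero_le _) le_rfl
  have hσmem : ∀ j ≤ n, s ≤ σ j ∧ σ j ≤ t := by
    intro j hj
    constructor
    · rw [← hσ0]; exact sew_chain hmono 0 j (Nat.zero_le _) hj
    · rw [← hσn]; exact sew_chain hmono j n hj le_rfl
  have hιchain : ∀ i j, i ≤ j → j ≤ n → ι i ≤ ι j := sew_chain hιmono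
  have hρchain : ∀ i j, i ≤ j → j ≤ N → ρ i ≤ ρ j := sew_chain hρmono
  -- block decomposition of the fine sum
  set f : ℕ → V := fun i => S (t - ρ (i + 1)) (Ξ (ρ (i + 1)) (ρ i)) with hf
  have hdecomp : sewRS S Ξ t ρ N
      = ∑ j ∈ Finset.range n, ∑ i ∈ Finset.Ico (ι j) (ι (j + 1)), f i := by
    rw [sewRS, ← hιn]
    exact sew_blocks f ι n hιmono hι0
  -- each block is S (t - σ (j+1)) applied to a block Riemann sum
  have hblock : ∀ j < n, ∑ i ∈ Finset.Ico (ι j) (ι (j + 1)), f i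
      = S (t - σ (j + 1)) (sewRS S Ξ (σ (j + 1)) (fun i => ρ (ι j + i)) (ι (j + 1) - ι j)) := by
    intro j hj
    have hje : ι j + (ι (j + 1) - ι j) = ι (j + 1) := by
      have := hιmono j hj; omega
    set τ : ℕ → ℝ := fun i => ρ (ι j + i) with hτ
    set L : ℕ := ι (j + 1) - ι j with hL
    have hτL : τ L = σ (j + 1) := by
      exact (congrArg ρ hje).trans (hcompat (j+1) (by omega))
    have hτu : ∀ i, i ≤ L → τ i ≤ σ (j + 1) := by
      intro i hi
      rw [← hτL]
      simp only [hτ]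
      exact hρchain _ _ (by omega) (by rw [← hιn]; exact le_trans (by omega) (hιchain (j+1) n (by omega) le_rfl))
    have hsp := sewRS_split S Ξ hSadd t (σ (j + 1)) τ L L le_rfl (hσmem (j+1) (by omega)).2 hτu
    rw [Finset.Ico_self, Finset.sum_empty, zero_add] at hsp
    rw [← hsp]
    rw [Finset.sum_Ico_eq_sum_range]
    rw [sewRS]
    refine Finset.sum_congr rfl ?_
    intro i _
    simp only [hf, hτ]
    congr 2 <;> omega
  -- rewrite the coarse sum
  have hcoarse : sewRS S Ξ t σ n
      = ∑ j ∈ Finset.range n, S (t - σ (j + 1)) (Ξ (σ (j + 1)) (σ j)) := rfl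
  have hdiff : sewRS S Ξ t ρ N - sewRS S Ξ t σ n
      = ∑ j ∈ Finset.range n, S (t - σ (j + 1))
          ((sewRS S Ξ (σ (j + 1)) (fun i => ρ (ι j + i)) (ι (j + 1) - ι j)) - Ξ (σ (j + 1)) (σ j)) := by
    rw [hdecomp, hcoarse, ← Finset.sum_sub_distrib]
    refine Finset.sum_congr rfl ?_
    intro j hj
    rw [Finset.mem_range] at hj
    rw [hblock j hj, ← map_sub]
  rw [hdiff]
  calc ‖∑ j ∈ Finset.range n, S (t - σ (j + 1))
          ((sewRS S Ξ (σ (j + 1)) (fun i => ρ (ι j + i)) (ι (j + 1) - ι j)) - Ξ (σ (j + 1)) (σ j))‖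
      ≤ ∑ j ∈ Finset.range n, ‖S (t - σ (j + 1))
          ((sewRS S Ξ (σ (j + 1)) (fun i => ρ (ι j + i)) (ι (j + 1) - ι j)) - Ξ (σ (j + 1)) (σ j))‖ :=
        norm_sum_le _ _
    _ ≤ ∑ j ∈ Finset.range n, M * ((M * 2 ^ μ * (μ / (μ - 1))) * C * (σ (j + 1) - σ j) ^ μ) := by
        refine Finset.sum_le_sum ?_
        intro j hj
        rw [Finset.mem_range] at hj
        have hje : ι j + (ι (j + 1) - ι j) = ι (j + 1) := by
          have := hιmono j hj; omega
        have hkey := sew_key' S Ξ T M C γ μ hμ hγ hM hC hS0 hSadd hSnorm hΞ1 hΞ2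
          (ι (j + 1) - ι j) (σ j) (σ (j + 1)) (fun i => ρ (ι j + i))
          (le_trans hs0 (hσmem j (by omega)).1) (le_trans (hσmem (j+1) (by omega)).2 htT)
          (by simpa using hcompat j (by omega))
          (by simp only [hje]; exact hcompat (j+1) (by omega))
          (by
            intro i hi
            have h1 : ι j + i < N := by
              have h2 : ι (j+1) ≤ N := by rw [← hιn]; exact hιchain (j+1) n (by omega) le_rfl
              omega
            have := hρmono (ι j + i) h1
            simpa [Nat.add_assoc] using this)
        have hSop : ‖S (t - σ (j + 1))‖ ≤ M := by
          apply hSnorm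
          · have := (hσmem (j+1) (by omega)).2; linarith
          · have := (hσmem (j+1) (by omega)).1; linarith
        calc ‖S (t - σ (j + 1)) (_ - Ξ (σ (j + 1)) (σ j))‖
            ≤ ‖S (t - σ (j + 1))‖ * ‖_ - Ξ (σ (j + 1)) (σ j)‖ := (S _).le_opNorm _
          _ ≤ M * ((M * 2 ^ μ * (μ / (μ - 1))) * C * (σ (j + 1) - σ j) ^ μ) :=
              mul_le_mul hSop hkey (norm_nonneg _) hM.le
    _ = M * ((M * 2 ^ μ * (μ / (μ - 1))) * C) * ∑ j ∈ Finset.range n, (σ (j + 1) - σ j) ^ μ := by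
        rw [Finset.mul_sum]
        refine Finset.sum_congr rfl ?_
        intro j _
        ring

/-- Two partitions of `[s,t]` with small meshes have close Riemann sums. -/
lemma sew_pair (S : ℝ → V →L[ℝ] V) (Ξ : ℝ → ℝ → V) (T M C γ μ : ℝ)
    (hμ : 1 < μ) (hγ : 0 < γ) (hM : 0 < M) (hC : 0 ≤ C)
    (hS0 : S 0 = ContinuousLinearMap.id ℝ V)
    (hSadd : ∀ a b : ℝ, 0 ≤ a → 0 ≤ b → S (a + b) = (S a).comp (S b))
    (hSnorm : ∀ r : ℝ, 0 ≤ r → r ≤ T → ‖S r‖ ≤ M)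
    (hΞ1 : ∀ s t : ℝ, 0 ≤ s → s ≤ t → t ≤ T → ‖Ξ t s‖ ≤ C * (t - s) ^ γ)
    (hΞ2 : ∀ s u t : ℝ, 0 ≤ s → s ≤ u → u ≤ t → t ≤ T →
      ‖Ξ t s - Ξ t u - S (t - u) (Ξ u s)‖ ≤ C * (t - s) ^ μ)
    (s t : ℝ) (hs0 : 0 ≤ s) (htT : t ≤ T)
    (σ : ℕ → ℝ) (n : ℕ) (hσ0 : σ 0 = s) (hσn : σ n = t) (hmonoσ : ∀ i < n, σ i ≤ σ (i + 1))
    (τ : ℕ → ℝ) (m : ℕ) (hτ0 : τ 0 = s) (hτm : τ m = t) (hmonoτ : ∀ i < m, τ i ≤ τ (i + 1))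
    (δ1 δ2 : ℝ) (hδ1 : 0 ≤ δ1) (hδ2 : 0 ≤ δ2)
    (hm1 : ∀ i < n, σ (i + 1) - σ i ≤ δ1) (hm2 : ∀ i < m, τ (i + 1) - τ i ≤ δ2) :
    ‖sewRS S Ξ t σ n - sewRS S Ξ t τ m‖
      ≤ M * ((M * 2 ^ μ * (μ / (μ - 1))) * C) * ((δ1 ^ (μ - 1) + δ2 ^ (μ - 1)) * (t - s)) := by
  classical
  have hst : s ≤ t := by
    rw [← hσ0, ← hσn]; exact sew_chain hmonoσ 0 n (Nat.zero_le _) le_rfl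
  set F : Finset ℝ :=
    (Finset.range (n + 1)).image σ ∪ (Finset.range (m + 1)).image τ with hF
  have hFmem : ∀ x ∈ F, s ≤ x ∧ x ≤ t := by
    intro x hx
    rw [hF, Finset.mem_union] at hx
    rcases hx with hx | hx
    · rw [Finset.mem_image] at hx
      obtain ⟨i, hi, rfl⟩ := hx
      rw [Finset.mem_range] at hi
      exact ⟨by rw [← hσ0]; exact sew_chain hmonoσ 0 i (Nat.zero_le _) (by omega),
        by rw [← hσn]; exact sew_chain hmonoσ i n (by omega) le_rfl⟩
    · rw [Finset.mem_image] at hx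
      obtain ⟨i, hi, rfl⟩ := hx
      rw [Finset.mem_range] at hi
      exact ⟨by rw [← hτ0]; exact sew_chain hmonoτ 0 i (Nat.zero_le _) (by omega),
        by rw [← hτm]; exact sew_chain hmonoτ i m (by omega) le_rfl⟩
  have hσF : ∀ j ≤ n, σ j ∈ F := by
    intro j hj
    rw [hF, Finset.mem_union]
    exact Or.inl (Finset.mem_image_of_mem σ (Finset.mem_range.mpr (by omega)))
  have hτF : ∀ j ≤ m, τ j ∈ F := by
    intro j hj
    rw [hF, Finset.mem_union]
    exact Or.inr (Finset.mem_image_of_mem τ (Finset.mem_range.mpr (by omega)))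
  set k : ℕ := F.card with hk
  have hk1 : 1 ≤ k := Finset.card_pos.mpr ⟨s, by rw [← hσ0]; exact hσF 0 (by omega)⟩
  set e := F.orderIsoOfFin rfl with he
  set ρ : ℕ → ℝ := fun i => if h : i < k then (e ⟨i, h⟩ : ℝ) else t with hρ
  set N : ℕ := k - 1 with hN
  have hρmono : ∀ i < N, ρ i ≤ ρ (i + 1) := by
    intro i hi
    have h1 : i < k := by omega
    have h2 : i + 1 < k := by omega
    simp only [hρ, dif_pos h1, dif_pos h2]
    have : (⟨i, h1⟩ : Fin k) ≤ ⟨i + 1, h2⟩ := by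
      simp [Fin.mk_le_mk]
    exact e.monotone this
  -- index maps into the refinement
  have hιdef : ∀ (π : ℕ → ℝ) (l : ℕ) (hπF : ∀ j ≤ l, π j ∈ F) (hπ0 : π 0 = s) (hπl : π l = t)
      (hπmono : ∀ i < l, π i ≤ π (i + 1)),
      ∃ ι : ℕ → ℕ, ι 0 = 0 ∧ ι l = N ∧ (∀ j < l, ι j ≤ ι (j + 1)) ∧ (∀ j ≤ l, ρ (ι j) = π j) := by
    intro π l hπF hπ0 hπl hπmono
    refine ⟨fun j => if h : j ≤ l then ((e.symm ⟨π j, hπF j h⟩ : Fin k) : ℕ) else N,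
      ?_, ?_, ?_, ?_⟩
    · simp only [dif_pos (Nat.zero_le l)]
      have h0k : (0 : ℕ) < k := by omega
      have hle : e.symm ⟨π 0, hπF 0 (Nat.zero_le l)⟩ ≤ (⟨0, h0k⟩ : Fin k) := by
        rw [OrderIso.symm_apply_le]
        exact Subtype.coe_le_coe.mp (by
          simpa [hπ0] using (hFmem _ (e ⟨0, h0k⟩).2).1)
      have h1 : ((e.symm ⟨π 0, hπF 0 (Nat.zero_le l)⟩ : Fin k) : ℕ) ≤ 0 := by
        simpa using Fin.le_def.mp hle
      omega
    · simp only [dif_pos (le_refl l)]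
      have hNk : N < k := by omega
      have hge : (⟨N, hNk⟩ : Fin k) ≤ e.symm ⟨π l, hπF l (le_refl l)⟩ := by
        rw [OrderIso.le_symm_apply]
        exact Subtype.coe_le_coe.mp (by
          simpa [hπl] using (hFmem _ (e ⟨N, hNk⟩).2).2)
      have h1 : N ≤ ((e.symm ⟨π l, hπF l (le_refl l)⟩ : Fin k) : ℕ) := by
        simpa using Fin.le_def.mp hge
      have h2 : ((e.symm ⟨π l, hπF l (le_refl l)⟩ : Fin k) : ℕ) < k :=
        (e.symm _).isLt
      omega
    · intro j hj
      simp only [dif_pos (by omega : j ≤ l), dif_pos (by omega : j + 1 ≤ l)]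
      refine Fin.le_def.mp (e.symm.monotone ?_)
      exact Subtype.coe_le_coe.mp (by simpa using hπmono j hj)
    · intro j hj
      simp only [dif_pos hj]
      have hlt : ((e.symm ⟨π j, hπF j hj⟩ : Fin k) : ℕ) < k := (e.symm _).isLt
      simp only [hρ, dif_pos hlt, Fin.eta, OrderIso.apply_symm_apply]
  obtain ⟨ι1, hι10, hι1n, hι1mono, hι1c⟩ :=
    hιdef σ n hσF hσ0 hσn hmonoσ
  obtain ⟨ι2, hι20, hι2m, hι2mono, hι2c⟩ :=
    hιdef τ m hτF hτ0 hτm hmonoτ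
  have hr1 := sew_refine S Ξ T M C γ μ hμ hγ hM hC hS0 hSadd hSnorm hΞ1 hΞ2
    s t hs0 htT σ n hσ0 hσn hmonoσ ρ N hρmono ι1 hι10 hι1n hι1mono hι1c
  have hr2 := sew_refine S Ξ T M C γ μ hμ hγ hM hC hS0 hSadd hSnorm hΞ1 hΞ2
    s t hs0 htT τ m hτ0 hτm hmonoτ ρ N hρmono ι2 hι20 hι2m hι2mono hι2c
  have hms1 := sew_mesh_sum σ n δ1 μ hδ1 hμ.le hmonoσ hm1
  have hms2 := sew_mesh_sum τ m δ2 μ hδ2 hμ.le hmonoτ hm2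
  rw [hσ0, hσn] at hms1
  rw [hτ0, hτm] at hms2
  have hK2 : (0:ℝ) ≤ M * ((M * 2 ^ μ * (μ / (μ - 1))) * C) := by
    have h1 : (0:ℝ) ≤ μ / (μ - 1) := div_nonneg (by linarith) (by linarith)
    have h2 : (0:ℝ) ≤ (2:ℝ) ^ μ := Real.rpow_nonneg (by norm_num) _
    apply mul_nonneg hM.le
    apply mul_nonneg _ hC
    exact mul_nonneg (mul_nonneg hM.le h2) h1
  have htri : sewRS S Ξ t σ n - sewRS S Ξ t τ m
      = (sewRS S Ξ t ρ N - sewRS S Ξ t τ m) - (sewRS S Ξ t ρ N - sewRS S Ξ t σ n) := by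
    abel
  rw [htri]
  calc ‖(sewRS S Ξ t ρ N - sewRS S Ξ t τ m) - (sewRS S Ξ t ρ N - sewRS S Ξ t σ n)‖
      ≤ ‖sewRS S Ξ t ρ N - sewRS S Ξ t τ m‖ + ‖sewRS S Ξ t ρ N - sewRS S Ξ t σ n‖ :=
        norm_sub_le _ _
    _ ≤ M * ((M * 2 ^ μ * (μ / (μ - 1))) * C) * (δ2 ^ (μ - 1) * (t - s))
        + M * ((M * 2 ^ μ * (μ / (μ - 1))) * C) * (δ1 ^ (μ - 1) * (t - s)) := by
        apply add_le_add
        · exact le_trans hr2 (mul_le_mul_of_nonneg_left hms2 hK2)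
        · exact le_trans hr1 (mul_le_mul_of_nonneg_left hms1 hK2)
    _ = M * ((M * 2 ^ μ * (μ / (μ - 1))) * C) * ((δ1 ^ (μ - 1) + δ2 ^ (μ - 1)) * (t - s)) := by
        ring

end SewAux

theorem semigroup_sewing_lemma {V : Type*} [NormedAddCommGroup V] [NormedSpace ℝ V]
    [CompleteSpace V] (μ M : ℝ) (hμ : 1 < μ) (hM : 0 < M) :
    ∃ K : ℝ, 0 < K ∧
      ∀ (T : ℝ), 0 < T → ∀ (γ : ℝ), 0 < γ → γ ≤ 1 → ∀ (C : ℝ), 0 ≤ C →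
      ∀ (S : ℝ → V →L[ℝ] V),
        S 0 = ContinuousLinearMap.id ℝ V →
        (∀ a b : ℝ, 0 ≤ a → 0 ≤ b → S (a + b) = (S a).comp (S b)) →
        (∀ v : V, Continuous fun r => S r v) →
        (∀ r : ℝ, 0 ≤ r → r ≤ T → ‖S r‖ ≤ M) →
      ∀ (Ξ : ℝ → ℝ → V),
        (Continuous fun p : ℝ × ℝ => Ξ p.1 p.2) →
        (∀ s t : ℝ, 0 ≤ s → s ≤ t → t ≤ T → ‖Ξ t s‖ ≤ C * (t - s) ^ γ) →
        (∀ s u t : ℝ, 0 ≤ s → s ≤ u → u ≤ t → t ≤ T →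
          ‖Ξ t s - Ξ t u - S (t - u) (Ξ u s)‖ ≤ C * (t - s) ^ μ) →
      ∃ I : ℝ → ℝ → V,
        (∀ s u t : ℝ, 0 ≤ s → s ≤ u → u ≤ t → t ≤ T →
          I t s = I t u + S (t - u) (I u s)) ∧
        (∀ s t : ℝ, 0 ≤ s → s ≤ t → t ≤ T → ‖I t s - Ξ t s‖ ≤ K * C * (t - s) ^ μ) ∧
        (∀ s t : ℝ, 0 ≤ s → s ≤ t → t ≤ T → ∀ ε : ℝ, 0 < ε →
          ∃ δ : ℝ, 0 < δ ∧ ∀ (n : ℕ) (σ : ℕ → ℝ),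
            σ 0 = s → σ n = t →
            (∀ i < n, σ i ≤ σ (i + 1)) →
            (∀ i < n, σ (i + 1) - σ i < δ) →
            ‖(∑ i ∈ Finset.range n, S (t - σ (i + 1)) (Ξ (σ (i + 1)) (σ i))) - I t s‖ < ε) := by
  have hμ1 : (0:ℝ) < μ - 1 := by linarith
  have h2μ : (0:ℝ) < (2:ℝ) ^ μ := Real.rpow_pos_of_pos (by norm_num) μ
  have hμμ : (0:ℝ) < μ / (μ - 1) := div_pos (by linarith) hμ1
  refine ⟨M * 2 ^ μ * (μ / (μ - 1)), by positivity, ?_⟩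
  intro T hT γ hγ hγ1 C hC S hS0 hSadd hScont hSnorm Ξ hΞc hΞ1 hΞ2
  classical
  haveI : Nonempty V := ⟨0⟩
  set K2 : ℝ := M * ((M * 2 ^ μ * (μ / (μ - 1))) * C) with hK2def
  have hK2 : 0 ≤ K2 := by positivity
  set unif : ℝ → ℝ → ℕ → ℕ → ℝ := fun s t N i => s + (t - s) * i / (N + 1) with hunif
  set f : ℝ → ℝ → ℕ → V := fun t s N => sewRS S Ξ t (unif s t N) (N + 1) with hfdef
  set I : ℝ → ℝ → V := fun t s => Filter.limUnder Filter.atTop (f t s) with hIdef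
  have hunif0 : ∀ s t N, unif s t N 0 = s := by intro s t N; simp [hunif]
  have hunifN : ∀ s t N, unif s t N (N + 1) = t := by
    intro s t N
    simp only [hunif]
    have : ((N:ℝ) + 1) ≠ 0 := by positivity
    push_cast
    field_simp; ring
  have hunifmono : ∀ s t : ℝ, s ≤ t → ∀ N, ∀ i < N + 1, unif s t N i ≤ unif s t N (i + 1) := by
    intro s t hst N i _
    simp only [hunif]
    have h1 : (0:ℝ) < (N:ℝ) + 1 := by positivity
    push_cast
    gcongr
    · linarith
  have hunifgap : ∀ s t : ℝ, ∀ N, ∀ i, unif s t N (i + 1) - unif s t N i = (t - s) / (N + 1) := by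
    intro s t N i
    simp only [hunif]
    have h1 : ((N:ℝ) + 1) ≠ 0 := by positivity
    push_cast
    field_simp
    ring
  -- uniform partition mesh tends to zero
  have hdN0 : ∀ s t : ℝ, Filter.Tendsto (fun N : ℕ => ((t - s) / ((N:ℝ) + 1)) ^ (μ - 1))
      Filter.atTop (nhds 0) := by
    intro s t
    have h1 : Filter.Tendsto (fun N : ℕ => (t - s) / ((N:ℝ) + 1)) Filter.atTop (nhds 0) := by
      have h2 := tendsto_one_div_add_atTop_nhds_zero_nat.const_mul (t - s)
      rw [mul_zero] at h2
      refine h2.congr ?_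
      intro N
      rw [mul_one_div]
    have h3 : Filter.Tendsto (fun x : ℝ => x ^ (μ - 1)) (nhds 0) (nhds 0) := by
      have h4 := (Real.continuousAt_rpow_const 0 (μ - 1) (Or.inr (by linarith))).tendsto
      rwa [Real.zero_rpow (by linarith : μ - 1 ≠ 0)] at h4
    exact h3.comp h1
  -- comparison of an arbitrary partition with the uniform ones
  have hpair' : ∀ s t : ℝ, 0 ≤ s → s ≤ t → t ≤ T →
      ∀ (σ : ℕ → ℝ) (n : ℕ) (δ1 : ℝ), 0 ≤ δ1 → σ 0 = s → σ n = t →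
        (∀ i < n, σ i ≤ σ (i + 1)) → (∀ i < n, σ (i + 1) - σ i ≤ δ1) → ∀ N : ℕ,
        ‖sewRS S Ξ t σ n - f t s N‖
          ≤ K2 * ((δ1 ^ (μ - 1) + ((t - s) / ((N:ℝ) + 1)) ^ (μ - 1)) * (t - s)) := by
    intro s t hs0 hst htT σ n δ1 hδ1 hσ0 hσn hmono hmesh N
    exact sew_pair S Ξ T M C γ μ hμ hγ hM hC hS0 hSadd hSnorm hΞ1 hΞ2 s t hs0 htT
      σ n hσ0 hσn hmono (unif s t N) (N + 1) (hunif0 s t N) (hunifN s t N)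
      (hunifmono s t hst N) δ1 ((t - s) / ((N:ℝ) + 1))
      hδ1 (div_nonneg (by linarith) (by positivity)) hmesh
      (fun i _ => le_of_eq (hunifgap s t N i))
  -- Cauchy property and convergence of the uniform Riemann sums
  have htend : ∀ s t : ℝ, 0 ≤ s → s ≤ t → t ≤ T →
      Filter.Tendsto (f t s) Filter.atTop (nhds (I t s)) := by
    intro s t hs0 hst htT
    have hcauchy : CauchySeq (f t s) := by
      refine cauchySeq_of_le_tendsto_0
        (fun N => K2 * ((((t - s) / ((N:ℝ) + 1)) ^ (μ - 1) + ((t - s) / ((N:ℝ) + 1)) ^ (μ - 1)) * (t - s))) ?_ ?_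
      · intro a b N ha hb
        rw [dist_eq_norm]
        have h1 := hpair' s t hs0 hst htT (unif s t a) (a + 1) ((t - s) / ((N:ℝ) + 1))
          (div_nonneg (by linarith) (by positivity)) (hunif0 s t a) (hunifN s t a)
          (hunifmono s t hst a)
          (fun i _ => by
            rw [hunifgap s t a i]
            exact div_le_div_of_nonneg_left (by linarith) (by positivity)
              (by push_cast; linarith [(Nat.cast_le (α := ℝ)).mpr ha]))
          b
        calc ‖f t s a - f t s b‖
            ≤ K2 * ((((t - s) / ((N:ℝ) + 1)) ^ (μ - 1) + ((t - s) / ((b:ℝ) + 1)) ^ (μ - 1)) * (t - s)) := h1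
          _ ≤ K2 * ((((t - s) / ((N:ℝ) + 1)) ^ (μ - 1) + ((t - s) / ((N:ℝ) + 1)) ^ (μ - 1)) * (t - s)) := by
              have hmono2 : (t - s) / ((b:ℝ) + 1) ≤ (t - s) / ((N:ℝ) + 1) :=
                div_le_div_of_nonneg_left (by linarith) (by positivity)
                  (by push_cast; linarith [(Nat.cast_le (α := ℝ)).mpr hb])
              have h2 : ((t - s) / ((b:ℝ) + 1)) ^ (μ - 1) ≤ ((t - s) / ((N:ℝ) + 1)) ^ (μ - 1) :=
                Real.rpow_le_rpow (div_nonneg (by linarith) (by positivity)) hmono2 (by linarith)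
              have h3 : (0:ℝ) ≤ t - s := by linarith
              apply mul_le_mul_of_nonneg_left _ hK2
              apply mul_le_mul_of_nonneg_right _ h3
              linarith
      · have h5 := ((hdN0 s t).const_add (((t - s) / ((0:ℝ) + 1)) ^ (μ - 1))).mul_const (t - s)
        -- rebuild: we want tendsto of N ↦ K2 * ((dN + dN) * (t-s)) to 0
        have h6 : Filter.Tendsto
            (fun N : ℕ => K2 * ((((t - s) / ((N:ℝ) + 1)) ^ (μ - 1) + ((t - s) / ((N:ℝ) + 1)) ^ (μ - 1)) * (t - s)))
            Filter.atTop (nhds (K2 * ((0 + 0) * (t - s)))) := by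
          exact (((hdN0 s t).add (hdN0 s t)).mul_const (t - s)).const_mul K2
        simpa using h6
    exact hcauchy.tendsto_limUnder
  -- property (3): mesh convergence
  have hconv : ∀ s t : ℝ, 0 ≤ s → s ≤ t → t ≤ T → ∀ ε : ℝ, 0 < ε →
      ∃ δ : ℝ, 0 < δ ∧ ∀ (n : ℕ) (σ : ℕ → ℝ),
        σ 0 = s → σ n = t → (∀ i < n, σ i ≤ σ (i + 1)) → (∀ i < n, σ (i + 1) - σ i < δ) →
        ‖sewRS S Ξ t σ n - I t s‖ < ε := by
    intro s t hs0 hst htT ε hε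
    set E : ℝ := K2 * (t - s) + 1 with hEdef
    have hE : 0 < E := by
      have : 0 ≤ K2 * (t - s) := mul_nonneg hK2 (by linarith)
      linarith
    set δ : ℝ := (ε / E) ^ (1 / (μ - 1)) with hδdef
    have hδpos : 0 < δ := Real.rpow_pos_of_pos (div_pos hε hE) _
    have hδpow : δ ^ (μ - 1) = ε / E := by
      rw [hδdef, ← Real.rpow_mul (le_of_lt (div_pos hε hE)), one_div,
        inv_mul_cancel₀ (ne_of_gt hμ1), Real.rpow_one]
    refine ⟨δ, hδpos, ?_⟩
    intro n σ hσ0 hσn hmono hmesh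
    have h5 := fun N => hpair' s t hs0 hst htT σ n δ hδpos.le hσ0 hσn hmono
      (fun i hi => (hmesh i hi).le) N
    have h6 : Filter.Tendsto (fun N => ‖sewRS S Ξ t σ n - f t s N‖) Filter.atTop
        (nhds ‖sewRS S Ξ t σ n - I t s‖) :=
      (tendsto_const_nhds.sub (htend s t hs0 hst htT)).norm
    have h7 : Filter.Tendsto
        (fun N : ℕ => K2 * ((δ ^ (μ - 1) + ((t - s) / ((N:ℝ) + 1)) ^ (μ - 1)) * (t - s)))
        Filter.atTop (nhds (K2 * ((δ ^ (μ - 1) + 0) * (t - s)))) :=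
      ((((hdN0 s t).const_add (δ ^ (μ - 1))).mul_const (t - s)).const_mul K2)
    have h8 := le_of_tendsto_of_tendsto' h6 h7 h5
    have hfin : K2 * ((δ ^ (μ - 1) + 0) * (t - s)) < ε := by
      rw [add_zero, hδpow]
      have h9 : K2 * (t - s) < E := by rw [hEdef]; linarith
      calc K2 * (ε / E * (t - s)) = K2 * (t - s) * (ε / E) := by ring
        _ < E * (ε / E) := mul_lt_mul_of_pos_right h9 (div_pos hε hE)
        _ = ε := by field_simp
    exact lt_of_le_of_lt h8 hfin
  -- property (2): distance to the germ
  have hbound : ∀ s t : ℝ, 0 ≤ s → s ≤ t → t ≤ T →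
      ‖I t s - Ξ t s‖ ≤ (M * 2 ^ μ * (μ / (μ - 1))) * C * (t - s) ^ μ := by
    intro s t hs0 hst htT
    have hk : ∀ N, ‖f t s N - Ξ t s‖ ≤ (M * 2 ^ μ * (μ / (μ - 1))) * C * (t - s) ^ μ := by
      intro N
      exact sew_key' S Ξ T M C γ μ hμ hγ hM hC hS0 hSadd hSnorm hΞ1 hΞ2 (N + 1) s t
        (unif s t N) hs0 htT (hunif0 s t N) (hunifN s t N) (hunifmono s t hst N)
    have h6 : Filter.Tendsto (fun N => ‖f t s N - Ξ t s‖) Filter.atTop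
        (nhds ‖I t s - Ξ t s‖) :=
      ((htend s t hs0 hst htT).sub tendsto_const_nhds).norm
    exact le_of_tendsto h6 (Filter.Eventually.of_forall hk)
  -- property (1): additivity
  have hadd : ∀ s u t : ℝ, 0 ≤ s → s ≤ u → u ≤ t → t ≤ T →
      I t s = I t u + S (t - u) (I u s) := by
    intro s u t hs0 hsu hut htT
    have hst : s ≤ t := le_trans hsu hut
    have hu0 : 0 ≤ u := le_trans hs0 hsu
    have huT : u ≤ T := le_trans hut htT
    -- concatenated partitions
    set ρ : ℕ → ℕ → ℝ := fun N i => if i ≤ N + 1 then unif s u N i else unif u t N (i - (N + 1))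
      with hρdef
    have hρtop : ∀ N, ∀ i ≤ N + 1, ρ N (N + 1 + i) = unif u t N i := by
      intro N i hi
      rcases Nat.eq_zero_or_pos i with rfl | hipos
      · simp only [hρdef, Nat.add_zero, if_pos (le_refl (N + 1))]
        rw [hunifN, hunif0]
      · simp only [hρdef, if_neg (by omega : ¬ N + 1 + i ≤ N + 1)]
        congr 1
        omega
    have hρlow : ∀ N, ∀ i ≤ N + 1, ρ N i = unif s u N i := by
      intro N i hi
      simp only [hρdef, if_pos hi]
    have hρ0 : ∀ N, ρ N 0 = s := by
      intro N; rw [hρlow N 0 (by omega), hunif0]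
    have hρend : ∀ N, ρ N (2 * N + 2) = t := by
      intro N
      have : 2 * N + 2 = N + 1 + (N + 1) := by omega
      rw [this, hρtop N (N + 1) le_rfl, hunifN]
    have hρmono : ∀ N, ∀ i < 2 * N + 2, ρ N i ≤ ρ N (i + 1) := by
      intro N i hi
      rcases Nat.lt_or_ge i (N + 1) with h | h
      · rw [hρlow N i (by omega), hρlow N (i + 1) (by omega)]
        exact hunifmono s u hsu N i h
      · obtain ⟨j, rfl⟩ : ∃ j, i = N + 1 + j := ⟨i - (N + 1), by omega⟩
        rw [hρtop N j (by omega), show N + 1 + j + 1 = N + 1 + (j + 1) from by omega,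
          hρtop N (j + 1) (by omega)]
        exact hunifmono u t hut N j (by omega)
    have hρgap : ∀ N, ∀ i < 2 * N + 2, ρ N (i + 1) - ρ N i ≤ (t - s) / ((N:ℝ) + 1) := by
      intro N i hi
      rcases Nat.lt_or_ge i (N + 1) with h | h
      · rw [hρlow N i (by omega), hρlow N (i + 1) (by omega), hunifgap]
        exact (div_le_div_iff_of_pos_right (by positivity)).mpr (by linarith)
      · obtain ⟨j, rfl⟩ : ∃ j, i = N + 1 + j := ⟨i - (N + 1), by omega⟩
        rw [hρtop N j (by omega), show N + 1 + j + 1 = N + 1 + (j + 1) from by omega,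
          hρtop N (j + 1) (by omega), hunifgap]
        exact (div_le_div_iff_of_pos_right (by positivity)).mpr (by linarith)
    -- splitting of the concatenated Riemann sum
    have hρsplit : ∀ N, sewRS S Ξ t (ρ N) (2 * N + 2)
        = sewRS S Ξ t (unif u t N) (N + 1) + S (t - u) (sewRS S Ξ u (unif s u N) (N + 1)) := by
      intro N
      have hσu : ∀ i, i ≤ N + 1 → ρ N i ≤ u := by
        intro i hi
        rw [hρlow N i hi]
        have := sew_chain (hunifmono s u hsu N) i (N + 1) hi le_rfl
        rwa [hunifN] at this
      have hsp := sewRS_split S Ξ hSadd t u (ρ N) (2 * N + 2) (N + 1) (by omega) hut hσu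
      have hA : sewRS S Ξ u (ρ N) (N + 1) = sewRS S Ξ u (unif s u N) (N + 1) := by
        unfold sewRS
        refine Finset.sum_congr rfl ?_
        intro i hi
        rw [Finset.mem_range] at hi
        rw [hρlow N i (by omega), hρlow N (i + 1) (by omega)]
      have hB : (∑ i ∈ Finset.Ico (N + 1) (2 * N + 2), S (t - ρ N (i + 1)) (Ξ (ρ N (i + 1)) (ρ N i)))
          = sewRS S Ξ t (unif u t N) (N + 1) := by
        rw [Finset.sum_Ico_eq_sum_range]
        have h1 : 2 * N + 2 - (N + 1) = N + 1 := by omega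
        rw [h1]
        unfold sewRS
        refine Finset.sum_congr rfl ?_
        intro i hi
        rw [Finset.mem_range] at hi
        rw [show N + 1 + i + 1 = N + 1 + (i + 1) from by omega, hρtop N (i + 1) (by omega),
          hρtop N i (by omega)]
      rw [hsp, hA, hB]
    -- the ε-argument
    set X : V := I t s - (I t u + S (t - u) (I u s)) with hXdef
    have hX0 : ‖X‖ ≤ 0 := by
      by_contra hcon
      push_neg at hcon
      set ε' : ℝ := ‖X‖ with hε'def
      obtain ⟨δ1, hδ1pos, hδ1⟩ := hconv s t hs0 hst htT (ε' / 3) (by linarith)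
      -- three eventually-conditions
      have hc1 : ∀ᶠ N : ℕ in Filter.atTop, (t - s) / ((N:ℝ) + 1) < δ1 := by
        have h1 : Filter.Tendsto (fun N : ℕ => (t - s) / ((N:ℝ) + 1)) Filter.atTop (nhds 0) := by
          have h2 := tendsto_one_div_add_atTop_nhds_zero_nat.const_mul (t - s)
          rw [mul_zero] at h2
          exact h2.congr (fun N => by rw [mul_one_div])
        exact h1.eventually_lt_const hδ1pos
      have hc2 : ∀ᶠ N : ℕ in Filter.atTop, ‖f t u N - I t u‖ < ε' / 3 := by
        have h1 : Filter.Tendsto (fun N => ‖f t u N - I t u‖) Filter.atTop (nhds 0) := by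
          have h2 := ((htend u t hu0 hut htT).sub
            (tendsto_const_nhds (x := I t u))).norm
          simpa using h2
        exact h1.eventually_lt_const (by linarith)
      have hc3 : ∀ᶠ N : ℕ in Filter.atTop, ‖f u s N - I u s‖ < ε' / (3 * M) := by
        have h1 : Filter.Tendsto (fun N => ‖f u s N - I u s‖) Filter.atTop (nhds 0) := by
          have h2 := ((htend s u hs0 hsu huT).sub
            (tendsto_const_nhds (x := I u s))).norm
          simpa using h2
        exact h1.eventually_lt_const (by positivity)
      obtain ⟨N, hN1, hN2, hN3⟩ := (hc1.and (hc2.and hc3)).exists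
      have hmesh : ∀ i < 2 * N + 2, ρ N (i + 1) - ρ N i < δ1 :=
        fun i hi => lt_of_le_of_lt (hρgap N i hi) hN1
      have ha := hδ1 (2 * N + 2) (ρ N) (hρ0 N) (hρend N) (hρmono N) hmesh
      have hXeq : X = (I t s - sewRS S Ξ t (ρ N) (2 * N + 2))
          + ((sewRS S Ξ t (unif u t N) (N + 1) - I t u)
          + (S (t - u) (sewRS S Ξ u (unif s u N) (N + 1)) - S (t - u) (I u s))) := by
        rw [hXdef, hρsplit N]
        abel
      have hb1 : ‖I t s - sewRS S Ξ t (ρ N) (2 * N + 2)‖ < ε' / 3 := by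
        rw [norm_sub_rev]; exact ha
      have hb2 : ‖sewRS S Ξ t (unif u t N) (N + 1) - I t u‖ < ε' / 3 := hN2
      have hSM : ‖S (t - u)‖ ≤ M := hSnorm _ (by linarith) (by linarith)
      have hb3 : ‖S (t - u) (sewRS S Ξ u (unif s u N) (N + 1)) - S (t - u) (I u s)‖ < ε' / 3 := by
        rw [← map_sub]
        calc ‖S (t - u) (sewRS S Ξ u (unif s u N) (N + 1) - I u s)‖
            ≤ ‖S (t - u)‖ * ‖sewRS S Ξ u (unif s u N) (N + 1) - I u s‖ :=
              (S (t - u)).le_opNorm _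
          _ ≤ M * ‖sewRS S Ξ u (unif s u N) (N + 1) - I u s‖ :=
              mul_le_mul_of_nonneg_right hSM (norm_nonneg _)
          _ < M * (ε' / (3 * M)) := mul_lt_mul_of_pos_left hN3 hM
          _ = ε' / 3 := by field_simp
      have hlt : ‖X‖ < ε' := by
        calc ‖X‖ ≤ ‖I t s - sewRS S Ξ t (ρ N) (2 * N + 2)‖
            + (‖sewRS S Ξ t (unif u t N) (N + 1) - I t u‖
            + ‖S (t - u) (sewRS S Ξ u (unif s u N) (N + 1)) - S (t - u) (I u s)‖) := by
              rw [hXeq]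
              exact le_trans (norm_add_le _ _) (add_le_add_right (norm_add_le _ _) _)
          _ < ε' / 3 + (ε' / 3 + ε' / 3) := by
              apply add_lt_add hb1 (add_lt_add hb2 hb3)
          _ = ε' := by ring
      rw [hε'def] at hlt
      exact lt_irrefl _ hlt
    have h4 : I t s - (I t u + S (t - u) (I u s)) = 0 := norm_le_zero_iff.mp hX0
    exact sub_eq_zero.mp h4

  refine ⟨I, hadd, hbound, ?_⟩
  intro s t hs0 hst htT ε hε
  obtain ⟨δ, hδpos, hδ⟩ := hconv s t hs0 hst htT ε hε
  exact ⟨δ, hδpos, fun n σ h1 h2 h3 h4 => hδ n σ h1 h2 h3 h4⟩
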